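/- arXiv:2206.07358 — 6 statements merged into one kernel-verified Lean document; each statement's English description precedes it below -/
import Mathlib

section
/- If G is contractible to the 4-cycle C_4 via ψ, and u, v are vertices of G lying in the same witness set such that {u,v} is a dominating set of G, then the witness set of the vertex of C_4 at distance 2 from ψ(u) is empty — a contradiction; hence in any C_4-witness structure of G, two vertices forming a dominating set cannot lie in the same witness set or in the union of one witness set. -/
/-- A `C₄`-witness structure of `G`: a partition of the vertices into four nonempty
connected sets, indexed by `ZMod 4`, where two distinct parts are joined by an edge iff
their indices are consecutive mod 4. -/
def IsC4Witness {V : Type*} (G : SimpleGraph V) (W : ZMod 4 → Set V) : Prop :=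
  (∀ v : V, ∃! i, v ∈ W i) ∧
  (∀ i, (W i).Nonempty) ∧
  (∀ i, (G.induce (W i)).Connected) ∧
  (∀ i j, i ≠ j →
    ((∃ u ∈ W i, ∃ v ∈ W j, G.Adj u v) ↔ (j = i + 1 ∨ j = i - 1)))

theorem c4_witness_dominating_pair_separated {V : Type*} (G : SimpleGraph V)
    (W : ZMod 4 → Set V) (hW : IsC4Witness G W) (u v : V) (huv : u ≠ v)
    (hdom : ∀ x : V, x = u ∨ x = v ∨ G.Adj x u ∨ G.Adj x v) :
    ∀ i, ¬ (u ∈ W i ∧ v ∈ W i) := by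
  obtain ⟨huniq, hne, _, hadj⟩ := hW
  rintro i ⟨hu, hv⟩
  obtain ⟨x, hx⟩ := hne (i + 2)
  have hii : i + 2 ≠ i := by
    have : ∀ j : ZMod 4, j + 2 ≠ j := by decide
    exact this i
  have hxu : x ≠ u := fun h => hii
    ((huniq u).unique (h ▸ hx) hu)
  have hxv : x ≠ v := fun h => hii
    ((huniq v).unique (h ▸ hx) hv)
  have hiff := hadj (i + 2) i hii
  have hbad : i = i + 2 + 1 ∨ i = i + 2 - 1 := by
    apply hiff.mp
    rcases hdom x with h | h | h | h
    · exact absurd h hxu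
    · exact absurd h hxv
    · exact ⟨x, hx, u, hu, h⟩
    · exact ⟨x, hx, v, hv, h⟩
  rcases hbad with h | h
  · have h3 : i + 3 = i + 0 := by linear_combination -h
    exact absurd (add_left_cancel h3) (by decide)
  · have h1 : i + 1 = i + 0 := by linear_combination -h
    exact absurd (add_left_cancel h1) (by decide)
end

section
/- If G is contractible to the 5-cycle C_5 via a witness structure {W0,...,W4}, and D ⊆ V(G) is a dominating set of G contained in a single witness set Wi, then the two witness sets not adjacent to Wi are both empty — a contradiction. Hence no dominating set of G can be contained in a single witness set of a C_5-witness structure. -/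
/-- A `C₄`-witness structure of `G`: a partition of the vertices into four nonempty
connected sets, indexed by `ZMod 5`, where two distinct parts are joined by an edge iff
their indices are consecutive mod 5. -/
def IsC5Witness {V : Type*} (G : SimpleGraph V) (W : ZMod 5 → Set V) : Prop :=
  (∀ v : V, ∃! i, v ∈ W i) ∧
  (∀ i, (W i).Nonempty) ∧
  (∀ i, (G.induce (W i)).Connected) ∧
  (∀ i j, i ≠ j →
    ((∃ u ∈ W i, ∃ v ∈ W j, G.Adj u v) ↔ (j = i + 1 ∨ j = i - 1)))

theorem c5_witness_no_dominating_set_in_one_part {V : Type*} (G : SimpleGraph V)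
    (W : ZMod 5 → Set V) (hW : IsC5Witness G W) (D : Set V)
    (hdom : ∀ v : V, v ∈ D ∨ ∃ d ∈ D, G.Adj v d)
    (i : ZMod 5) (hDW : D ⊆ W i) : False := by
  obtain ⟨hpart, hne, hconn, hadj⟩ := hW
  obtain ⟨v, hv⟩ := hne (i + 2)
  have hne2 : i + 2 ≠ i := by
    intro h
    have h2 : (2 : ZMod 5) = 0 := add_left_cancel (h.trans (add_zero i).symm)
    exact absurd h2 (by decide)
  rcases hdom v with hvD | ⟨d, hdD, hvd⟩
  · have hvi := hDW hvD
    obtain ⟨j, _, huniq⟩ := hpart v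
    exact hne2 ((huniq _ hv).trans (huniq _ hvi).symm)
  · have : (∃ u ∈ W (i+2), ∃ w ∈ W i, G.Adj u w) := ⟨v, hv, d, hDW hdD, hvd⟩
    have h := (hadj (i+2) i hne2).mp this
    rcases h with h | h
    · have h3 : i + 0 = i + 3 := ((add_zero i).trans h).trans (by ring)
      exact absurd (add_left_cancel h3) (by decide)
    · have h1 : i + 0 = i + 1 := ((add_zero i).trans h).trans (by ring)
      exact absurd (add_left_cancel h1) (by decide)
end

section
/- Suppose G is contractible to C_4 via witness structure {W0,W1,W2,W3}, and d1, d2, d3 are three pairwise non-adjacent vertices of G each with neighborhood exactly {u,v}. Then u and v do not lie in opposite witness sets; that is, it is not the case that u ∈ Wi and v ∈ W_{(i+2) mod 4}. -/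
private lemma c4aux_loc {V : Type*} {G : SimpleGraph V} {W : ZMod 4 → Set V}
    (hW : IsC4Witness G W) {u v : V} {i : ZMod 4}
    (hu : u ∈ W i) (hv : v ∈ W (i + 2)) {d : V} {j : ZMod 4}
    (hdj : d ∈ W j) (hau : G.Adj d u) (hav : G.Adj d v) :
    j = i + 1 ∨ j = i + 3 := by
  obtain ⟨k, rfl⟩ : ∃ k, j = i + k := ⟨j - i, by ring⟩
  have h1 : i + k ≠ i → (i = (i + k) + 1 ∨ i = (i + k) - 1) := fun hne =>
    (hW.2.2.2 (i + k) i hne).mp ⟨d, hdj, u, hu, hau⟩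
  have h2 : i + k ≠ i + 2 → (i + 2 = (i + k) + 1 ∨ i + 2 = (i + k) - 1) := fun hne =>
    (hW.2.2.2 (i + k) (i + 2) hne).mp ⟨d, hdj, v, hv, hav⟩
  have key : ∀ a b : ZMod 4,
      (a + b ≠ a → (a = (a + b) + 1 ∨ a = (a + b) - 1)) →
      (a + b ≠ a + 2 → (a + 2 = (a + b) + 1 ∨ a + 2 = (a + b) - 1)) →
      (a + b = a + 1 ∨ a + b = a + 3) := by decide
  exact key i k h1 h2

private lemma c4aux_two {V : Type*} {G : SimpleGraph V} {W : ZMod 4 → Set V}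
    (hW : IsC4Witness G W) {u v : V} {i : ZMod 4}
    (hu : u ∈ W i) (hv : v ∈ W (i + 2)) {a b : V} {j : ZMod 4}
    (hab : a ≠ b) (hNa : G.neighborSet a = {u, v})
    (ha : a ∈ W j) (hb : b ∈ W j) (hji : j ≠ i) (hj2 : j ≠ i + 2) : False := by
  have hreach := (hW.2.2.1 j).preconnected ⟨a, ha⟩ ⟨b, hb⟩
  obtain ⟨p⟩ := hreach
  cases p with
  | nil => exact hab rfl
  | cons h p' =>
    rename_i w
    have hadj : G.Adj a (w : V) := h
    have hmem : (w : V) ∈ G.neighborSet a := hadj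
    rw [hNa] at hmem
    rcases hmem with rfl | rfl
    · exact hji ((hW.1 (w : V)).unique w.2 hu)
    · exact hj2 ((hW.1 (w : V)).unique w.2 hv)

theorem c4_witness_three_common_neighbors_not_opposite {V : Type*}
    (G : SimpleGraph V) (W : ZMod 4 → Set V) (hW : IsC4Witness G W)
    (u v d₁ d₂ d₃ : V)
    (hd : d₁ ≠ d₂ ∧ d₁ ≠ d₃ ∧ d₂ ≠ d₃)
    (hnadj : ¬ G.Adj d₁ d₂ ∧ ¬ G.Adj d₁ d₃ ∧ ¬ G.Adj d₂ d₃)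
    (hN₁ : G.neighborSet d₁ = {u, v}) (hN₂ : G.neighborSet d₂ = {u, v})
    (hN₃ : G.neighborSet d₃ = {u, v}) :
    ¬ ∃ i : ZMod 4, u ∈ W i ∧ v ∈ W (i + 2) := by
  rintro ⟨i, hu, hv⟩
  have hadj : ∀ d : V, G.neighborSet d = {u, v} → G.Adj d u ∧ G.Adj d v := by
    intro d hN
    constructor
    · have : u ∈ G.neighborSet d := by rw [hN]; left; rfl
      exact this
    · have : v ∈ G.neighborSet d := by rw [hN]; right; rfl
      exact this
  obtain ⟨j₁, hj₁, _⟩ := hW.1 d₁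
  obtain ⟨j₂, hj₂, _⟩ := hW.1 d₂
  obtain ⟨j₃, hj₃, _⟩ := hW.1 d₃
  have h₁ := c4aux_loc hW hu hv hj₁ (hadj d₁ hN₁).1 (hadj d₁ hN₁).2
  have h₂ := c4aux_loc hW hu hv hj₂ (hadj d₂ hN₂).1 (hadj d₂ hN₂).2
  have h₃ := c4aux_loc hW hu hv hj₃ (hadj d₃ hN₃).1 (hadj d₃ hN₃).2
  have hne : ∀ a : ZMod 4, a + 1 ≠ a ∧ a + 1 ≠ a + 2 ∧ a + 3 ≠ a ∧ a + 3 ≠ a + 2 := by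
    decide
  obtain ⟨n1, n2, n3, n4⟩ := hne i
  rcases h₁ with rfl | rfl <;> rcases h₂ with h₂ | h₂ <;> rcases h₃ with h₃ | h₃
  · exact c4aux_two hW hu hv hd.1 hN₁ hj₁ (h₂ ▸ hj₂) n1 n2
  · exact c4aux_two hW hu hv hd.1 hN₁ hj₁ (h₂ ▸ hj₂) n1 n2
  · exact c4aux_two hW hu hv hd.2.1 hN₁ hj₁ (h₃ ▸ hj₃) n1 n2
  · exact c4aux_two hW hu hv hd.2.2 hN₂ (h₂ ▸ hj₂) (h₃ ▸ hj₃) n3 n4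
  · exact c4aux_two hW hu hv hd.2.2 hN₂ (h₂ ▸ hj₂) (h₃ ▸ hj₃) n1 n2
  · exact c4aux_two hW hu hv hd.2.1 hN₁ hj₁ (h₃ ▸ hj₃) n3 n4
  · exact c4aux_two hW hu hv hd.1 hN₁ hj₁ (h₂ ▸ hj₂) n3 n4
  · exact c4aux_two hW hu hv hd.1 hN₁ hj₁ (h₂ ▸ hj₂) n3 n4
end

section
/- Suppose G is contractible to C_4 via witness structure {W0,W1,W2,W3}, and d1, d2, d3 are three distinct pairwise non-adjacent vertices each with neighborhood exactly {u,v} in G. Then no d_k forms a singleton witness set. -/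
lemma c4_aux {V : Type*} (G : SimpleGraph V) (W : ZMod 4 → Set V)
    (hW : IsC4Witness G W) (u v a b c : V)
    (hab : a ≠ b) (hac : a ≠ c) (hbc : b ≠ c)
    (hNa : G.neighborSet a = {u, v}) (hNb : G.neighborSet b = {u, v})
    (hNc : G.neighborSet c = {u, v}) (i : ZMod 4) : W i ≠ {a} := by
  intro hWi
  obtain ⟨hpart, hne, hconn, hadj⟩ := hW
  have huniq : ∀ x : V, ∀ j k : ZMod 4, x ∈ W j → x ∈ W k → j = k := by
    intro x j k hj hk
    obtain ⟨m, _, hu⟩ := hpart x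
    rw [hu j hj, hu k hk]
  have hip : i ≠ i + 1 := (by decide : ∀ j : ZMod 4, j ≠ j + 1) i
  have him : i ≠ i - 1 := (by decide : ∀ j : ZMod 4, j ≠ j - 1) i
  have hpm : i + 1 ≠ i - 1 := (by decide : ∀ j : ZMod 4, j + 1 ≠ j - 1) i
  -- edge from W i to W (i+1)
  obtain ⟨x, hx, y, hy, hxy⟩ := (hadj i (i+1) hip).mpr (Or.inl rfl)
  have hxa : x = a := by rwa [hWi] at hx
  rw [hxa] at hxy
  have hy' : y = u ∨ y = v := by
    have : y ∈ G.neighborSet a := hxy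
    rw [hNa] at this; simpa using this
  obtain ⟨x', hx', z, hz, hxz⟩ := (hadj i (i-1) him).mpr (Or.inr rfl)
  have hxa' : x' = a := by rwa [hWi] at hx'
  rw [hxa'] at hxz
  have hz' : z = u ∨ z = v := by
    have : z ∈ G.neighborSet a := hxz
    rw [hNa] at this; simpa using this
  have hyz : y ≠ z := fun h => hpm (huniq y (i+1) (i-1) hy (h ▸ hz))
  -- rename so that u' ∈ W (i+1), v' ∈ W (i-1), {u',v'} = {u,v}
  obtain ⟨u', v', hu', hv', hset⟩ :
      ∃ u' v', u' ∈ W (i+1) ∧ v' ∈ W (i-1) ∧ ({u', v'} : Set V) = {u, v} := by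
    rcases hy' with h1 | h1 <;> rcases hz' with h2 | h2
    · exact absurd (h1.trans h2.symm) hyz
    · exact ⟨y, z, hy, hz, by rw [h1, h2]⟩
    · exact ⟨y, z, hy, hz, by rw [h1, h2, Set.pair_comm]⟩
    · exact absurd (h1.trans h2.symm) hyz
  rw [← hset] at hNa hNb hNc
  -- any vertex with neighborhood {u',v'} other than a lies in W (i+2)
  have hkey : ∀ x : V, G.neighborSet x = {u', v'} → x ≠ a → x ∈ W (i + 2) := by
    intro t hNt hta
    obtain ⟨m, hm, _⟩ := hpart t
    have hcases : m = i ∨ m = i + 1 ∨ m = i - 1 ∨ m = i + 2 :=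
      (by decide : ∀ m j : ZMod 4, m = j ∨ m = j + 1 ∨ m = j - 1 ∨ m = j + 2) m i
    have hadjtu : G.Adj t u' := by
      have : u' ∈ G.neighborSet t := by rw [hNt]; left; rfl
      exact this
    have hadjtv : G.Adj t v' := by
      have : v' ∈ G.neighborSet t := by rw [hNt]; right; rfl
      exact this
    rcases hcases with h | h | h | h
    · exfalso; rw [h, hWi] at hm; exact hta hm
    · exact absurd ((hadj (i+1) (i-1) hpm).mp ⟨t, h ▸ hm, v', hv', hadjtv⟩)
        ((by decide : ∀ j : ZMod 4, ¬(j - 1 = j + 1 + 1 ∨ j - 1 = j + 1 - 1)) i)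
    · exact absurd ((hadj (i-1) (i+1) hpm.symm).mp ⟨t, h ▸ hm, u', hu', hadjtu⟩)
        ((by decide : ∀ j : ZMod 4, ¬(j + 1 = j - 1 + 1 ∨ j + 1 = j - 1 - 1)) i)
    · exact h ▸ hm
  have hb2 : b ∈ W (i + 2) := hkey b hNb hab.symm
  have hc2 : c ∈ W (i + 2) := hkey c hNc hac.symm
  have hu2 : u' ∉ W (i + 2) := fun h =>
    (by decide : ∀ j : ZMod 4, j + 1 ≠ j + 2) i (huniq u' (i+1) (i+2) hu' h)
  have hv2 : v' ∉ W (i + 2) := fun h =>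
    (by decide : ∀ j : ZMod 4, j - 1 ≠ j + 2) i (huniq v' (i-1) (i+2) hv' h)
  -- connectivity of W (i+2) contradicted
  obtain ⟨w⟩ := (hconn (i+2)).preconnected ⟨b, hb2⟩ ⟨c, hc2⟩
  have hne' : (⟨b, hb2⟩ : W (i+2)) ≠ ⟨c, hc2⟩ := by simpa using hbc
  cases w with
  | nil => exact hne' rfl
  | cons h p =>
    rename_i s
    have hGadj : G.Adj b (s : V) := h
    have hmem : (s : V) ∈ G.neighborSet b := hGadj
    rw [hNb] at hmem
    rcases hmem with h' | h'
    · exact hu2 (h' ▸ s.2)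
    · exact hv2 (h' ▸ s.2)

theorem c4_witness_three_common_neighbors_not_singleton {V : Type*}
    (G : SimpleGraph V) (W : ZMod 4 → Set V) (hW : IsC4Witness G W)
    (u v d₁ d₂ d₃ : V)
    (hd : d₁ ≠ d₂ ∧ d₁ ≠ d₃ ∧ d₂ ≠ d₃)
    (hnadj : ¬ G.Adj d₁ d₂ ∧ ¬ G.Adj d₁ d₃ ∧ ¬ G.Adj d₂ d₃)
    (hN₁ : G.neighborSet d₁ = {u, v}) (hN₂ : G.neighborSet d₂ = {u, v})
    (hN₃ : G.neighborSet d₃ = {u, v}) :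
    ∀ k ∈ ({d₁, d₂, d₃} : Set V), ∀ i : ZMod 4, W i ≠ {k} := by
  obtain ⟨h12, h13, h23⟩ := hd
  rintro k (rfl | rfl | rfl) i
  · exact c4_aux G W hW u v k d₂ d₃ h12 h13 h23 hN₁ hN₂ hN₃ i
  · exact c4_aux G W hW u v k d₁ d₃ h12.symm h23 h13 hN₂ hN₁ hN₃ i
  · exact c4_aux G W hW u v k d₁ d₂ h13.symm h23.symm h12 hN₃ hN₁ hN₂ i
end

section
/- Let G be contractible to the 5-cycle via witness structure {W0,...,W4}, let uv be an edge of G such that u and v have a common neighbor in G. If the witness set containing a degree-2 vertex λ whose only neighbors are u and v were a singleton {λ}, then u and v lie in the two witness sets adjacent to {λ}, which are at distance 2 on the cycle; but since u,v have a common neighbor distinct from λ, u and v are joined by a path of length 2 avoiding λ, contradicting that nonconsecutive witness sets are non-adjacent. Hence: in any C_5-witness structure of G, a vertex λ with N(λ) = {u,v} where u and v have a common neighbor other than λ cannot form a singleton witness set. -/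
theorem c5_witness_subdivision_vertex_not_singleton {V : Type*}
    (G : SimpleGraph V) (W : ZMod 5 → Set V) (hW : IsC5Witness G W)
    (lam u v : V) (hN : G.neighborSet lam = {u, v})
    (w : V) (hw : w ≠ lam) (hwu : G.Adj w u) (hwv : G.Adj w v) :
    ∀ i : ZMod 5, W i ≠ {lam} := by
  obtain ⟨hpart, hne, hconn, hadj⟩ := hW
  intro i hi
  -- uniqueness of witness set
  have uniq : ∀ {x : V} {a b : ZMod 5}, x ∈ W a → x ∈ W b → a = b := by
    intro x a b hxa hxb
    obtain ⟨c, _, hc⟩ := hpart x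
    exact (hc a hxa).trans (hc b hxb).symm
  have hlu : G.Adj lam u := by
    have : u ∈ G.neighborSet lam := by rw [hN]; exact Set.mem_insert _ _
    exact this
  have hlv : G.Adj lam v := by
    have : v ∈ G.neighborSet lam := by rw [hN]; exact Set.mem_insert_of_mem _ rfl
    exact this
  obtain ⟨ju, hju, _⟩ := hpart u
  obtain ⟨jv, hjv, _⟩ := hpart v
  obtain ⟨jw, hjw, _⟩ := hpart w
  have hlam : lam ∈ W i := by rw [hi]; rfl
  have hjui : ju ≠ i := by
    intro h; subst h
    have : u ∈ ({lam} : Set V) := by rw [← hi]; exact hju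
    exact hlu.ne' this
  have hjvi : jv ≠ i := by
    intro h; subst h
    have : v ∈ ({lam} : Set V) := by rw [← hi]; exact hjv
    exact hlv.ne' this
  have hjwi : jw ≠ i := by
    intro h; subst h
    have : w ∈ ({lam} : Set V) := by rw [← hi]; exact hjw
    exact hw this
  have hju5 : ju = i + 1 ∨ ju = i - 1 :=
    (hadj i ju (Ne.symm hjui)).mp ⟨lam, hlam, u, hju, hlu⟩
  have hjv5 : jv = i + 1 ∨ jv = i - 1 :=
    (hadj i jv (Ne.symm hjvi)).mp ⟨lam, hlam, v, hjv, hlv⟩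
  -- arithmetic facts in ZMod 5
  have hX : ∀ a : ZMod 5, a + 1 ≠ a - 1 ∧ a ≠ a - 1 ∧ a ≠ a + 1 := by decide
  -- any witness set adjacent to W i must contain u or v
  have hside : ∀ o : ZMod 5, (o = i + 1 ∨ o = i - 1) → i ≠ o → o ≠ ju → o ≠ jv → False := by
    intro o ho hio hoju hojv
    obtain ⟨x, hx, y, hy, hxy⟩ := (hadj i o hio).mpr ho
    have hxlam : x = lam := by rw [hi] at hx; exact hx
    have hyn : y ∈ G.neighborSet lam := by rw [← hxlam]; exact hxy
    rw [hN, Set.mem_insert_iff, Set.mem_singleton_iff] at hyn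
    rcases hyn with rfl | rfl
    · exact hoju (uniq hy hju)
    · exact hojv (uniq hy hjv)
  -- u and v lie in different witness sets
  have hjujv : ju ≠ jv := by
    intro h
    rcases hju5 with h1 | h1 <;> rcases hjv5 with h2 | h2
    · exact hside (i - 1) (Or.inr rfl) (hX i).2.1
        (by rw [h1]; intro hc; exact (hX i).1 hc.symm)
        (by rw [h2]; intro hc; exact (hX i).1 hc.symm)
    · rw [h1, h2] at h; exact (hX i).1 h
    · rw [h1, h2] at h; exact (hX i).1 h.symm
    · exact hside (i + 1) (Or.inl rfl) (hX i).2.2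
        (by rw [h1]; intro hc; exact (hX i).1 hc)
        (by rw [h2]; intro hc; exact (hX i).1 hc)
  -- w's witness set is adjacent-or-equal to both ju and jv
  have h1 : jw = ju ∨ jw = ju + 1 ∨ jw = ju - 1 := by
    by_cases h : jw = ju
    · exact Or.inl h
    · exact Or.inr ((hadj ju jw (Ne.symm h)).mp ⟨u, hju, w, hjw, hwu.symm⟩)
  have h2 : jw = jv ∨ jw = jv + 1 ∨ jw = jv - 1 := by
    by_cases h : jw = jv
    · exact Or.inl h
    · exact Or.inr ((hadj jv jw (Ne.symm h)).mp ⟨v, hjv, w, hjw, hwv.symm⟩)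
  have key : ∀ i ju jv jw : ZMod 5, (ju = i + 1 ∨ ju = i - 1) →
      (jv = i + 1 ∨ jv = i - 1) → ju ≠ jv → jw ≠ i →
      (jw = ju ∨ jw = ju + 1 ∨ jw = ju - 1) →
      (jw = jv ∨ jw = jv + 1 ∨ jw = jv - 1) → False := by
    set_option synthInstance.maxHeartbeats 1000000 in
    set_option synthInstance.maxSize 2048 in
    set_option maxHeartbeats 2000000 in
    decide
  exact key i ju jv jw hju5 hjv5 hjujv hjwi h1 h2
end

section
/- Suppose G is contractible to C_5 via witness structure {W0,...,W4} with α^p ∈ W^p for p = 0,...,4 (indices mod 5), and suppose S = {s0,...,s4} ⊆ V(G) induces a 5-cycle such that each s_p is adjacent to α^p and α^{p+1 mod 5}. Then S intersects every witness set W^j. -/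
theorem c5_witness_variable_cycle_meets_every_part {V : Type*}
    (G : SimpleGraph V) (W : ZMod 5 → Set V) (hW : IsC5Witness G W)
    (α s : ZMod 5 → V) (hα : ∀ p, α p ∈ W p)
    (hs_inj : Function.Injective s)
    (hs_cycle : ∀ p q, p ≠ q → (G.Adj (s p) (s q) ↔ (q = p + 1 ∨ q = p - 1)))
    (hsα : ∀ p, G.Adj (s p) (α p) ∧ G.Adj (s p) (α (p + 1))) :
    ∀ j : ZMod 5, ∃ p, s p ∈ W j := by
  obtain ⟨huniq, -, -, hadj⟩ := hW
  -- every s p lies in W p or W (p+1)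
  have key : ∀ p k : ZMod 5, s p ∈ W k → k = p ∨ k = p + 1 := by
    intro p k hk
    by_contra hcon
    push_neg at hcon
    obtain ⟨h1, h2⟩ := hcon
    have e1 : p = k + 1 ∨ p = k - 1 :=
      (hadj k p h1).mp ⟨s p, hk, α p, hα p, (hsα p).1⟩
    have e2 : p + 1 = k + 1 ∨ p + 1 = k - 1 :=
      (hadj k (p + 1) h2).mp
        ⟨s p, hk, α (p + 1), hα (p + 1), (hsα p).2⟩
    have hk1 : k = p - 1 := by
      rcases e1 with e | e
      · rw [e]; ring
      · exact absurd (by rw [e]; ring) h2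
    have hk2 : k = p + 2 := by
      rcases e2 with e | e
      · exact absurd (by linear_combination -e) h1
      · linear_combination -e
    have h3 : (3 : ZMod 5) = 0 := by linear_combination hk1 - hk2
    exact absurd h3 (by decide)
  intro j
  by_contra hmiss
  push_neg at hmiss
  obtain ⟨k1, hk1mem, -⟩ := huniq (s j)
  obtain ⟨k2, hk2mem, -⟩ := huniq (s (j - 1))
  have hk1 : k1 = j + 1 := by
    rcases key j k1 hk1mem with h | h
    · exact absurd (h ▸ hk1mem) (hmiss j)
    · exact h
  have hk2 : k2 = j - 1 := by
    rcases key (j - 1) k2 hk2mem with h | h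
    · exact h
    · have : k2 = j := by linear_combination h
      exact absurd (this ▸ hk2mem) (hmiss (j - 1))
  have hne : (j - 1 : ZMod 5) ≠ j := by
    intro e
    have : (1 : ZMod 5) = 0 := by linear_combination -e
    exact absurd this (by decide)
  have hadjS : G.Adj (s (j - 1)) (s j) :=
    (hs_cycle (j - 1) j hne).mpr (Or.inl (by ring))
  have hne' : k2 ≠ k1 := by
    rw [hk1, hk2]
    intro e
    have : (2 : ZMod 5) = 0 := by linear_combination -e
    exact absurd this (by decide)
  have := (hadj k2 k1 hne').mp ⟨s (j - 1), hk2mem, s j, hk1mem, hadjS⟩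
  rw [hk1, hk2] at this
  rcases this with e | e
  · exact absurd (show (1 : ZMod 5) = 0 by linear_combination e) (by decide)
  · exact absurd (show (3 : ZMod 5) = 0 by linear_combination e) (by decide)
end
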